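/- arXiv:1805.07671 — 3 statements merged into one kernel-verified Lean document; each statement's English description precedes it below -/
import Mathlib

section
/- Let ω > 0 and c > 0. Let Y = [0,1]³ carry three-dimensional Lebesgue measure and S = [0,1]² carry two-dimensional Lebesgue measure. Let ε : Y → ℂ be measurable with Im ε(y) ≥ c for almost every y ∈ Y, and let σ : S → ℂ be measurable with Re σ(s) ≥ c for almost every s ∈ S. Let g : Y → ℂ³ and w : S → ℂ³ be measurable with ‖g‖², ‖w‖², ε·‖g‖², and σ·‖w‖² integrable. Set ξ = ∫_Y g(y) dy ∈ ℂ³. Then Im( ∫_Y ε(y) ‖g(y)‖² dy + (i/ω) ∫_S σ(s) ‖w(s)‖² ds ) ≥ c ‖ξ‖². -/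
open MeasureTheory

/-- Lebesgue measure restricted to the unit cell `Y = [0,1]³`. -/
noncomputable def cellMeasureY : Measure (Fin 3 → ℝ) :=
  volume.restrict (Set.Icc (0 : Fin 3 → ℝ) 1)

/-- Lebesgue measure restricted to the unit square `S = [0,1]²`. -/
noncomputable def cellMeasureS : Measure (Fin 2 → ℝ) :=
  volume.restrict (Set.Icc (0 : Fin 2 → ℝ) 1)

/-- Coercivity estimate (2.10)/(4.5) for the effective permittivity of the
homogenized Maxwell system: if `Im ε ≥ c` a.e. on `Y` and `Re σ ≥ c` a.e. on
`S`, then for square-integrable fields `g` on `Y` and `w` on `S` with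
`ξ = ∫_Y g`, one has
`Im (∫_Y ε ‖g‖² + (i/ω) ∫_S σ ‖w‖²) ≥ c ‖ξ‖²`. -/
theorem effective_permittivity_coercive
    (ω c : ℝ) (hω : 0 < ω) (hc : 0 < c)
    (ε : (Fin 3 → ℝ) → ℂ) (σ : (Fin 2 → ℝ) → ℂ)
    (hε : Measurable ε) (hσ : Measurable σ)
    (hεim : ∀ᵐ y ∂cellMeasureY, c ≤ (ε y).im)
    (hσre : ∀ᵐ s ∂cellMeasureS, c ≤ (σ s).re)
    (g : (Fin 3 → ℝ) → EuclideanSpace ℂ (Fin 3))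
    (w : (Fin 2 → ℝ) → EuclideanSpace ℂ (Fin 3))
    (hg : StronglyMeasurable g) (hw : StronglyMeasurable w)
    (hg2 : Integrable (fun y => ‖g y‖ ^ 2) cellMeasureY)
    (hw2 : Integrable (fun s => ‖w s‖ ^ 2) cellMeasureS)
    (hεg2 : Integrable (fun y => ε y * (‖g y‖ ^ 2 : ℂ)) cellMeasureY)
    (hσw2 : Integrable (fun s => σ s * (‖w s‖ ^ 2 : ℂ)) cellMeasureS)
    (ξ : EuclideanSpace ℂ (Fin 3)) (hξ : ξ = ∫ y, g y ∂cellMeasureY) :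
    c * ‖ξ‖ ^ 2 ≤
      ((∫ y, ε y * (‖g y‖ ^ 2 : ℂ) ∂cellMeasureY) +
        (Complex.I / (ω : ℂ)) * ∫ s, σ s * (‖w s‖ ^ 2 : ℂ) ∂cellMeasureS).im := by
  have hprobY : IsProbabilityMeasure cellMeasureY := by
    constructor
    rw [cellMeasureY, Measure.restrict_apply_univ, Real.volume_Icc_pi]
    simp
  -- integrability of ‖g‖
  have hgn : Integrable (fun y => ‖g y‖) cellMeasureY := by
    refine Integrable.mono' ((integrable_const 1).add hg2)
      hg.norm.aestronglyMeasurable (Filter.Eventually.of_forall fun y => ?_)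
    have h := sq_nonneg (‖g y‖ - 1)
    simp only [Pi.add_apply, Real.norm_eq_abs, abs_of_nonneg (norm_nonneg (g y))]
    nlinarith [norm_nonneg (g y)]
  set m := ∫ y, ‖g y‖ ∂cellMeasureY with hm
  -- Jensen / Cauchy–Schwarz
  have key : m ^ 2 ≤ ∫ y, ‖g y‖ ^ 2 ∂cellMeasureY := by
    have h0 : 0 ≤ ∫ y, (‖g y‖ - m) ^ 2 ∂cellMeasureY :=
      integral_nonneg fun y => sq_nonneg _
    have hexp : ∫ y, (‖g y‖ - m) ^ 2 ∂cellMeasureY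
        = (∫ y, ‖g y‖ ^ 2 ∂cellMeasureY) - m ^ 2 := by
      have heq : (fun y => (‖g y‖ - m) ^ 2)
          = fun y => (‖g y‖ ^ 2 - (2 * m) * ‖g y‖) + m ^ 2 := by
        funext y; ring
      have hA : Integrable (fun y => ‖g y‖ ^ 2 - 2 * m * ‖g y‖) cellMeasureY :=
        hg2.sub (hgn.const_mul (2 * m))
      have hB : Integrable (fun y => (2 : ℝ) * m * ‖g y‖) cellMeasureY :=
        hgn.const_mul (2 * m)
      rw [heq, integral_add hA (integrable_const _),
        integral_sub hg2 hB, integral_const_mul, integral_const]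
      simp [← hm]
      ring
    linarith
  have hξm : ‖ξ‖ ≤ m := by
    rw [hξ]; exact norm_integral_le_integral_norm g
  have hξ2 : ‖ξ‖ ^ 2 ≤ ∫ y, ‖g y‖ ^ 2 ∂cellMeasureY :=
    le_trans (by nlinarith [norm_nonneg ξ]) key
  -- first term
  have himf : Integrable (fun y => (ε y).im * ‖g y‖ ^ 2) cellMeasureY := by
    have := hεg2.im
    simpa [Complex.mul_im, ← Complex.ofReal_pow] using this
  have him1 : ∫ y, (ε y).im * ‖g y‖ ^ 2 ∂cellMeasureY
      = (∫ y, ε y * (‖g y‖ ^ 2 : ℂ) ∂cellMeasureY).im := by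
    have h := integral_im (𝕜 := ℂ) hεg2
    simpa [Complex.mul_im, ← Complex.ofReal_pow] using h
  have h1 : c * ∫ y, ‖g y‖ ^ 2 ∂cellMeasureY
      ≤ (∫ y, ε y * (‖g y‖ ^ 2 : ℂ) ∂cellMeasureY).im := by
    rw [← him1, ← integral_const_mul]
    refine integral_mono_ae (hg2.const_mul c) himf ?_
    filter_upwards [hεim] with y hy
    exact mul_le_mul_of_nonneg_right hy (sq_nonneg _)
  -- second term
  have hrew : Integrable (fun s => (σ s).re * ‖w s‖ ^ 2) cellMeasureS := by
    have := hσw2.re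
    simpa [Complex.mul_re, ← Complex.ofReal_pow] using this
  have hre2 : ∫ s, (σ s).re * ‖w s‖ ^ 2 ∂cellMeasureS
      = (∫ s, σ s * (‖w s‖ ^ 2 : ℂ) ∂cellMeasureS).re := by
    have h := integral_re (𝕜 := ℂ) hσw2
    simpa [Complex.mul_re, ← Complex.ofReal_pow] using h
  have hre_nonneg : 0 ≤ (∫ s, σ s * (‖w s‖ ^ 2 : ℂ) ∂cellMeasureS).re := by
    rw [← hre2]
    refine integral_nonneg_of_ae ?_
    filter_upwards [hσre] with s hs
    exact mul_nonneg (le_trans hc.le hs) (sq_nonneg _)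
  have h2 : 0 ≤ (Complex.I / (ω : ℂ) *
      ∫ s, σ s * (‖w s‖ ^ 2 : ℂ) ∂cellMeasureS).im := by
    set z := ∫ s, σ s * (‖w s‖ ^ 2 : ℂ) ∂cellMeasureS
    have : (Complex.I / (ω : ℂ) * z).im = z.re / ω := by
      rw [div_mul_eq_mul_div, Complex.div_im]
      simp [Complex.mul_im, Complex.mul_re]
      rw [div_eq_div_iff (by positivity) (by positivity)]
      ring
    rw [this]
    positivity
  rw [Complex.add_im]
  have hmain : c * ‖ξ‖ ^ 2 ≤ c * ∫ y, ‖g y‖ ^ 2 ∂cellMeasureY :=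
    mul_le_mul_of_nonneg_left hξ2 hc.le
  linarith
end

section
/- Let L > 0, d > 0, M ≥ 0, and let Σ ⊆ ℝ² be a measurable set of finite two-dimensional Lebesgue measure |Σ|. Let u : ℝ² × ℝ → ℂ³ be measurable with ∫_{Σ×(−L,L)} ‖u(x)‖² dx < ∞ and let F : ℝ² × ℝ → ℂ³ be measurable with ‖F(x)‖ ≤ M for all x. Let K = { k ∈ ℤ : −L < k·d and k·d < L − d }, and for t ∈ (0,1) define α(t) = ∑_{k ∈ K} d ∫_Σ ⟨u(x′,(k+t)d), F(x′,(k+t)d)⟩ dx′, where ⟨a,b⟩ = ∑_{j=1}^{3} a_j b_j. Then α(t) is defined (finite) for almost every t ∈ (0,1), and ∫_0^1 |α(t)|² dt ≤ 2L · |Σ| · M² · ∫_{Σ×(−L,L)} ‖u(x)‖² dx. -/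
open MeasureTheory

/-- The bilinear (non-conjugated) dot product `⟨a,b⟩ = ∑ j, a j * b j` on `ℂ³`. -/
noncomputable def bilinDot (a b : EuclideanSpace ℂ (Fin 3)) : ℂ :=
  ∑ j, a j * b j

lemma norm_bilinDot_le (a b : EuclideanSpace ℂ (Fin 3)) : ‖bilinDot a b‖ ≤ ‖a‖ * ‖b‖ := by
  set c : EuclideanSpace ℂ (Fin 3) := WithLp.toLp 2 (fun j => (starRingEnd ℂ) (a j)) with hc
  have h1 : bilinDot a b = inner ℂ c b := by
    simp [bilinDot, hc, PiLp.inner_apply, RCLike.inner_apply, mul_comm]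
  have h2 : ‖c‖ = ‖a‖ := by simp [hc, EuclideanSpace.norm_eq]
  rw [h1, ← h2]
  exact norm_inner_le_norm c b

lemma bilinDot_stronglyMeasurable {X : Type*} [MeasurableSpace X]
    {f g : X → EuclideanSpace ℂ (Fin 3)} (hf : StronglyMeasurable f)
    (hg : StronglyMeasurable g) : StronglyMeasurable fun x => bilinDot (f x) (g x) := by
  unfold bilinDot
  apply Finset.stronglyMeasurable_fun_sum
  intro j _
  exact (((EuclideanSpace.proj j :
      EuclideanSpace ℂ (Fin 3) →L[ℂ] ℂ).continuous.comp_stronglyMeasurable hf).mul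
    ((EuclideanSpace.proj j :
      EuclideanSpace ℂ (Fin 3) →L[ℂ] ℂ).continuous.comp_stronglyMeasurable hg))

lemma affine_qmp {d : ℝ} (hd : d ≠ 0) (c : ℝ) :
    Measure.QuasiMeasurePreserving (fun t : ℝ => d * t + c) volume volume := by
  refine ⟨(measurable_id.const_mul d).add_const c, ?_⟩
  have h1 : (fun t : ℝ => d * t + c) = (fun s : ℝ => s + c) ∘ (fun t : ℝ => d * t) := rfl
  rw [h1, ← Measure.map_map (measurable_add_const c) (measurable_const_mul d),
    Real.map_volume_mul_left hd, Measure.map_smul, map_add_right_eq_self volume c]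
  exact Measure.smul_absolutelyContinuous

lemma sq_integral_le_mul {X : Type*} [MeasurableSpace X] (μ : Measure X) [IsFiniteMeasure μ]
    {f : X → ℝ} (hf0 : 0 ≤ᵐ[μ] f) (hfm : AEStronglyMeasurable f μ)
    (hf2 : Integrable (fun x => f x ^ 2) μ) :
    (∫ x, f x ∂μ) ^ 2 ≤ (μ Set.univ).toReal * ∫ x, f x ^ 2 ∂μ := by
  have hmem : MemLp f 2 μ := (memLp_two_iff_integrable_sq hfm).2 hf2
  have hone : MemLp (fun _ : X => (1:ℝ)) 2 μ := memLp_const 1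
  have hpq : Real.HolderConjugate 2 2 := Real.HolderConjugate.two_two
  have h := integral_mul_le_Lp_mul_Lq_of_nonneg (μ := μ) hpq hf0
    (Filter.Eventually.of_forall fun _ => zero_le_one) ?hf ?hg
  case hf => simpa using hmem
  case hg => simpa using hone
  simp only [mul_one, Real.one_rpow] at h
  have hrw : ∀ a : X, (f a : ℝ) ^ (2:ℝ) = f a ^ 2 := fun a => by
    rw [← Real.rpow_natCast (f a) 2]; norm_num
  rw [show (fun a => f a ^ (2:ℝ)) = fun a => f a ^ 2 from funext hrw] at h
  have h1 : ∫ _ : X, (1:ℝ) ∂μ = (μ Set.univ).toReal := by simp [Measure.real]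
  rw [h1] at h
  have hI2 : 0 ≤ ∫ x, f x ^ 2 ∂μ := integral_nonneg fun x => sq_nonneg _
  have hμ : 0 ≤ (μ Set.univ).toReal := ENNReal.toReal_nonneg
  have h0 : 0 ≤ ∫ x, f x ∂μ := integral_nonneg_of_ae hf0
  calc (∫ x, f x ∂μ) ^ 2
      ≤ ((∫ x, f x ^ 2 ∂μ) ^ (1/2:ℝ) * (μ Set.univ).toReal ^ (1/2:ℝ)) ^ 2 :=
        pow_le_pow_left₀ h0 h 2
    _ = (μ Set.univ).toReal * ∫ x, f x ^ 2 ∂μ := by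
        rw [mul_pow, ← Real.rpow_natCast ((∫ x, f x ^ 2 ∂μ) ^ (1/2:ℝ)) 2,
          ← Real.rpow_natCast ((μ Set.univ).toReal ^ (1/2:ℝ)) 2,
          ← Real.rpow_mul hI2, ← Real.rpow_mul hμ]
        norm_num [mul_comm]

section sliceLemmas
variable {S : Set (Fin 2 → ℝ)} {u F : (Fin 2 → ℝ) × ℝ → EuclideanSpace ℂ (Fin 3)} {M : ℝ}

lemma slice_norm_integrable (hSfin : volume S < ⊤) {s : ℝ}
    (hm : AEStronglyMeasurable (fun x' => ‖u (x', s)‖) (volume.restrict S))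
    (hs : IntegrableOn (fun x' => ‖u (x', s)‖ ^ 2) S) :
    IntegrableOn (fun x' => ‖u (x', s)‖) S := by
  have : IsFiniteMeasure (volume.restrict S) := ⟨by rwa [Measure.restrict_apply_univ]⟩
  refine Integrable.mono ((integrable_const (1:ℝ)).add hs) hm ?_
  refine Filter.Eventually.of_forall fun x' => ?_
  have h0 : (0:ℝ) ≤ ‖u (x', s)‖ := norm_nonneg _
  have h1 : ‖u (x', s)‖ ≤ 1 + ‖u (x', s)‖ ^ 2 := by nlinarith
  simpa [Real.norm_of_nonneg, abs_of_nonneg, h0] using h1.trans (le_abs_self _)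

lemma slice_bilin_integrable (hSfin : volume S < ⊤)
    (hu : StronglyMeasurable u) (hF : StronglyMeasurable F) (hFbd : ∀ x, ‖F x‖ ≤ M)
    {s : ℝ} (hs : IntegrableOn (fun x' => ‖u (x', s)‖ ^ 2) S) :
    IntegrableOn (fun x' => bilinDot (u (x', s)) (F (x', s))) S := by
  have hus : StronglyMeasurable fun x' : Fin 2 → ℝ => u (x', s) :=
    hu.comp_measurable (measurable_id.prodMk measurable_const)
  have hFs : StronglyMeasurable fun x' : Fin 2 → ℝ => F (x', s) :=
    hF.comp_measurable (measurable_id.prodMk measurable_const)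
  have hnm : IntegrableOn (fun x' => ‖u (x', s)‖) S :=
    slice_norm_integrable hSfin hus.norm.aestronglyMeasurable hs
  refine Integrable.mono (hnm.const_mul M)
    (bilinDot_stronglyMeasurable hus hFs).aestronglyMeasurable ?_
  refine Filter.Eventually.of_forall fun x' => ?_
  have h1 := norm_bilinDot_le (u (x', s)) (F (x', s))
  have h2 : ‖u (x', s)‖ * ‖F (x', s)‖ ≤ M * ‖u (x', s)‖ := by
    rw [mul_comm]; exact mul_le_mul_of_nonneg_right (hFbd _) (norm_nonneg _)
  calc ‖bilinDot (u (x', s)) (F (x', s))‖ ≤ M * ‖u (x', s)‖ := h1.trans h2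
    _ ≤ ‖M * ‖u (x', s)‖‖ := le_abs_self _

lemma slice_bound (hSfin : volume S < ⊤) (hM : 0 ≤ M)
    (hu : StronglyMeasurable u) (hF : StronglyMeasurable F) (hFbd : ∀ x, ‖F x‖ ≤ M)
    {s : ℝ} (hs : IntegrableOn (fun x' => ‖u (x', s)‖ ^ 2) S) :
    ‖∫ x' in S, bilinDot (u (x', s)) (F (x', s))‖ ^ 2 ≤
      (volume S).toReal * M ^ 2 * ∫ x' in S, ‖u (x', s)‖ ^ 2 := by
  have : IsFiniteMeasure (volume.restrict S) := ⟨by rwa [Measure.restrict_apply_univ]⟩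
  have hus : StronglyMeasurable fun x' : Fin 2 → ℝ => u (x', s) :=
    hu.comp_measurable (measurable_id.prodMk measurable_const)
  have hnm : IntegrableOn (fun x' => ‖u (x', s)‖) S :=
    slice_norm_integrable hSfin hus.norm.aestronglyMeasurable hs
  have hbi := slice_bilin_integrable hSfin hu hF hFbd hs
  have h1 : ‖∫ x' in S, bilinDot (u (x', s)) (F (x', s))‖ ≤ M * ∫ x' in S, ‖u (x', s)‖ := by
    calc ‖∫ x' in S, bilinDot (u (x', s)) (F (x', s))‖
        ≤ ∫ x' in S, ‖bilinDot (u (x', s)) (F (x', s))‖ := norm_integral_le_integral_norm _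
      _ ≤ ∫ x' in S, M * ‖u (x', s)‖ := by
          refine integral_mono hbi.norm (hnm.const_mul M) fun x' => ?_
          refine (norm_bilinDot_le _ _).trans ?_
          rw [mul_comm]; exact mul_le_mul_of_nonneg_right (hFbd _) (norm_nonneg _)
      _ = M * ∫ x' in S, ‖u (x', s)‖ := integral_const_mul M _
  have h2 : (∫ x' in S, ‖u (x', s)‖) ^ 2 ≤ (volume S).toReal * ∫ x' in S, ‖u (x', s)‖ ^ 2 := by
    have := sq_integral_le_mul (volume.restrict S)
      (Filter.Eventually.of_forall fun x' => norm_nonneg (u (x', s)))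
      hus.norm.aestronglyMeasurable hs
    rwa [Measure.restrict_apply_univ] at this
  calc ‖∫ x' in S, bilinDot (u (x', s)) (F (x', s))‖ ^ 2
      ≤ (M * ∫ x' in S, ‖u (x', s)‖) ^ 2 := pow_le_pow_left₀ (norm_nonneg _) h1 2
    _ = M ^ 2 * (∫ x' in S, ‖u (x', s)‖) ^ 2 := by ring
    _ ≤ M ^ 2 * ((volume S).toReal * ∫ x' in S, ‖u (x', s)‖ ^ 2) :=
        mul_le_mul_of_nonneg_left h2 (sq_nonneg M)
    _ = (volume S).toReal * M ^ 2 * ∫ x' in S, ‖u (x', s)‖ ^ 2 := by ring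

lemma key_fubini {d : ℝ} (hd : 0 < d) (k : ℤ)
    (huI : IntegrableOn (fun x => ‖u x‖ ^ 2) (S ×ˢ Set.Ioo ((k:ℝ)*d) ((k:ℝ)*d + d))) :
    (∀ᵐ t ∂(volume.restrict (Set.Ioo (0:ℝ) 1)),
        IntegrableOn (fun x' => ‖u (x', ((k:ℝ) + t) * d)‖ ^ 2) S) ∧
    IntegrableOn (fun t => ∫ x' in S, ‖u (x', ((k:ℝ) + t) * d)‖ ^ 2) (Set.Ioo (0:ℝ) 1) ∧
    d * (∫ t in Set.Ioo (0:ℝ) 1, ∫ x' in S, ‖u (x', ((k:ℝ) + t) * d)‖ ^ 2)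
      = ∫ x in S ×ˢ Set.Ioo ((k:ℝ)*d) ((k:ℝ)*d + d), ‖u x‖ ^ 2 := by
  set I : Set ℝ := Set.Ioo ((k:ℝ)*d) ((k:ℝ)*d + d) with hIdef
  have hprod : volume.restrict (S ×ˢ I) = (volume.restrict S).prod (volume.restrict I) := by
    rw [Measure.prod_restrict, ← Measure.volume_eq_prod]
  have hw0 : Integrable (fun p : (Fin 2 → ℝ) × ℝ => ‖u p‖ ^ 2)
      ((volume.restrict S).prod (volume.restrict I)) := by
    rw [← hprod]; exact huI
  have hw : Integrable (fun p : ℝ × (Fin 2 → ℝ) => ‖u (p.2, p.1)‖ ^ 2)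
      ((volume.restrict I).prod (volume.restrict S)) := hw0.swap
  set v : ℝ → ℝ := fun s => ∫ x' in S, ‖u (x', s)‖ ^ 2 with hvdef
  have harg : ∀ t : ℝ, ((k:ℝ) + t) * d = d * t + (k:ℝ) * d := fun t => by ring
  have haeI : ∀ᵐ s ∂(volume.restrict I),
      Integrable (fun x' => ‖u (x', s)‖ ^ 2) (volume.restrict S) := hw.prod_right_ae
  have haeI' : ∀ᵐ s, s ∈ I → Integrable (fun x' => ‖u (x', s)‖ ^ 2) (volume.restrict S) :=
    (ae_restrict_iff' measurableSet_Ioo).1 haeI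
  have haet : ∀ᵐ t, (d * t + (k:ℝ)*d) ∈ I →
      Integrable (fun x' => ‖u (x', d * t + (k:ℝ)*d)‖ ^ 2) (volume.restrict S) :=
    (affine_qmp hd.ne' ((k:ℝ)*d)).ae haeI'
  have keyA : ∀ᵐ t ∂(volume.restrict (Set.Ioo (0:ℝ) 1)),
      IntegrableOn (fun x' => ‖u (x', ((k:ℝ) + t) * d)‖ ^ 2) S := by
    filter_upwards [ae_restrict_of_ae haet, ae_restrict_mem measurableSet_Ioo] with t h1 h2
    have hmem : (d * t + (k:ℝ)*d) ∈ I := by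
      constructor
      · nlinarith [h2.1]
      · nlinarith [h2.2]
    simp only [harg]
    exact h1 hmem
  refine ⟨keyA, ?_, ?_⟩
  · have hvI : Integrable v (volume.restrict I) := hw.integral_prod_left
    have hle : (k:ℝ)*d ≤ (k:ℝ)*d + d := by linarith
    have hIi : IntervalIntegrable v volume ((k:ℝ)*d) ((k:ℝ)*d + d) :=
      (intervalIntegrable_iff_integrableOn_Ioo_of_le hle).2 hvI
    have h1 := hIi.comp_add_right ((k:ℝ)*d)
    rw [show (k:ℝ)*d - (k:ℝ)*d = 0 by ring, show (k:ℝ)*d + d - (k:ℝ)*d = d by ring] at h1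
    have h2 := h1.comp_mul_left (c := d)
    rw [zero_div, div_self hd.ne'] at h2
    have h3 : IntegrableOn (fun t => v (d * t + (k:ℝ)*d)) (Set.Ioo (0:ℝ) 1) :=
      (intervalIntegrable_iff_integrableOn_Ioo_of_le zero_le_one).1 h2
    simpa only [harg] using h3
  · have hvIeq : ∫ s in I, v s = ∫ x in S ×ˢ I, ‖u x‖ ^ 2 := by
      have e1 := integral_integral (μ := volume.restrict I) (ν := volume.restrict S)
        (f := fun s x' => ‖u (x', s)‖ ^ 2) hw
      have e2 := integral_prod_swap (μ := volume.restrict S) (ν := volume.restrict I)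
        (f := fun p : (Fin 2 → ℝ) × ℝ => ‖u p‖ ^ 2)
      rw [hprod]
      calc ∫ s in I, v s = ∫ z, ‖u (z.2, z.1)‖ ^ 2
            ∂((volume.restrict I).prod (volume.restrict S)) := e1
        _ = ∫ z, ‖u z‖ ^ 2 ∂((volume.restrict S).prod (volume.restrict I)) := e2
    have ecov : ∫ t in Set.Ioo (0:ℝ) 1, v (d * t + (k:ℝ)*d) = d⁻¹ * ∫ s in I, v s := by
      rw [← integral_Ioc_eq_integral_Ioo, ← intervalIntegral.integral_of_le zero_le_one,
        intervalIntegral.integral_comp_mul_add v hd.ne' ((k:ℝ)*d),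
        show d * 0 + (k:ℝ)*d = (k:ℝ)*d by ring, show d * 1 + (k:ℝ)*d = (k:ℝ)*d + d by ring,
        intervalIntegral.integral_of_le (by linarith : (k:ℝ)*d ≤ (k:ℝ)*d + d),
        integral_Ioc_eq_integral_Ioo, smul_eq_mul]
    calc d * (∫ t in Set.Ioo (0:ℝ) 1, ∫ x' in S, ‖u (x', ((k:ℝ) + t) * d)‖ ^ 2)
        = d * (∫ t in Set.Ioo (0:ℝ) 1, v (d * t + (k:ℝ)*d)) := by
          congr 1; refine integral_congr_ae (Filter.Eventually.of_forall fun t => ?_)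
          simp only [harg, hvdef]
      _ = d * (d⁻¹ * ∫ s in I, v s) := by rw [ecov]
      _ = ∫ s in I, v s := by field_simp
      _ = ∫ x in S ×ˢ I, ‖u x‖ ^ 2 := hvIeq

end sliceLemmas

lemma K_finite {L d : ℝ} (hd : 0 < d) :
    {k : ℤ | -L < (k : ℝ) * d ∧ (k : ℝ) * d < L - d}.Finite := by
  apply Set.Finite.subset (Set.finite_Icc ⌈(-L)/d⌉ ⌊(L-d)/d⌋)
  rintro k ⟨h1, h2⟩
  simp only [Set.mem_Icc]
  constructor
  · exact Int.ceil_le.2 ((div_le_iff₀ hd).2 (by linarith))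
  · exact Int.le_floor.2 ((le_div_iff₀ hd).2 (by linarith))

lemma sum_d_le {L d : ℝ} (hL : 0 < L) (hd : 0 < d) (Kf : Finset ℤ)
    (hKf : ∀ k ∈ Kf, -L < (k : ℝ) * d ∧ (k : ℝ) * d < L - d) :
    ∑ _k ∈ Kf, d ≤ 2 * L := by
  set J : ℤ → Set ℝ := fun k => Set.Ioc ((k:ℝ)*d) ((k:ℝ)*d + d) with hJ
  have hdis : (↑Kf : Set ℤ).PairwiseDisjoint J := by
    intro j _ k _ hjk
    simp only [Function.onFun, hJ, Set.Ioc_disjoint_Ioc]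
    rcases lt_or_gt_of_ne hjk with h | h
    · have : (j:ℝ) + 1 ≤ (k:ℝ) := by exact_mod_cast h
      refine min_le_of_left_le (le_max_of_le_right ?_)
      nlinarith
    · have : (k:ℝ) + 1 ≤ (j:ℝ) := by exact_mod_cast h
      refine min_le_of_right_le (le_max_of_le_left ?_)
      nlinarith
  have hmeas : ∀ k ∈ Kf, MeasurableSet (J k) := fun k _ => measurableSet_Ioc
  have hsub : (⋃ k ∈ Kf, J k) ⊆ Set.Ioo (-L) L := by
    intro s hs
    simp only [Set.mem_iUnion] at hs
    obtain ⟨k, hk, hks⟩ := hs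
    obtain ⟨hk1, hk2⟩ := hKf k hk
    exact ⟨lt_of_lt_of_le hk1 hks.1.le, by nlinarith [hks.2]⟩
  have h1 : ∑ k ∈ Kf, volume (J k) ≤ volume (Set.Ioo (-L) L) := by
    rw [← measure_biUnion_finset hdis hmeas]
    exact measure_mono hsub
  have h2 : ∀ k ∈ Kf, volume (J k) = ENNReal.ofReal d := by
    intro k _; rw [hJ]; simp [Real.volume_Ioc]
  rw [Finset.sum_congr rfl h2, Finset.sum_const, Real.volume_Ioo, nsmul_eq_mul] at h1
  have h3 : ENNReal.ofReal (∑ _k ∈ Kf, d) ≤ ENNReal.ofReal (2 * L) := by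
    rw [Finset.sum_const, nsmul_eq_mul, ENNReal.ofReal_mul (by positivity), ENNReal.ofReal_natCast]
    calc (Kf.card : ENNReal) * ENNReal.ofReal d ≤ ENNReal.ofReal (L - -L) := h1
      _ = ENNReal.ofReal (2 * L) := by rw [show L - -L = 2 * L by ring]
  exact (ENNReal.ofReal_le_ofReal_iff (by positivity)).1 h3

/-- The `L²(0,1)` bound (4.9) on the slice functional `α` of Lemma 4.2 of the
paper: for a family of parallel sheets at heights `k·d`, `k ∈ K`, the averages
`α(t) = ∑_{k∈K} d ∫_Σ ⟨u(x′,(k+t)d), F(x′,(k+t)d)⟩ dx′` are defined for a.e.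
`t ∈ (0,1)` and satisfy
`∫₀¹ |α(t)|² dt ≤ 2L·|Σ|·M²·∫_{Σ×(−L,L)} ‖u‖²`. -/
theorem slice_functional_L2_bound
    (L d M : ℝ) (hL : 0 < L) (hd : 0 < d) (hM : 0 ≤ M)
    (S : Set (Fin 2 → ℝ)) (hSm : MeasurableSet S) (hSfin : volume S < ⊤)
    (u F : (Fin 2 → ℝ) × ℝ → EuclideanSpace ℂ (Fin 3))
    (hu : StronglyMeasurable u)
    (huL2 : IntegrableOn (fun x => ‖u x‖ ^ 2) (S ×ˢ Set.Ioo (-L) L))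
    (hF : StronglyMeasurable F)
    (hFbd : ∀ x, ‖F x‖ ≤ M)
    (K : Set ℤ) (hK : K = {k : ℤ | -L < (k : ℝ) * d ∧ (k : ℝ) * d < L - d})
    (α : ℝ → ℂ)
    (hα : ∀ t, α t = ∑' k : K,
      d * ∫ x' in S,
        bilinDot (u (x', (((k : ℤ) : ℝ) + t) * d)) (F (x', (((k : ℤ) : ℝ) + t) * d))) :
    (∀ᵐ t ∂(volume.restrict (Set.Ioo (0 : ℝ) 1)), ∀ k ∈ K,
      IntegrableOn
        (fun x' => bilinDot (u (x', ((k : ℝ) + t) * d)) (F (x', ((k : ℝ) + t) * d))) S) ∧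
    (∫ t in Set.Ioo (0 : ℝ) 1, ‖α t‖ ^ 2) ≤
      2 * L * (volume S).toReal * M ^ 2 *
        ∫ x in S ×ˢ Set.Ioo (-L) L, ‖u x‖ ^ 2 := by
  have hKfin : K.Finite := by rw [hK]; exact K_finite hd
  set Kf := hKfin.toFinset with hKfdef
  have hmemK : ∀ k, k ∈ Kf ↔ k ∈ K := fun k => hKfin.mem_toFinset
  have hKf : ∀ k ∈ Kf, -L < (k : ℝ) * d ∧ (k : ℝ) * d < L - d := by
    intro k hk
    have hkK := (hmemK k).1 hk
    rw [hK] at hkK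
    exact hkK
  have hIsub : ∀ k ∈ Kf, (S ×ˢ Set.Ioo ((k:ℝ)*d) ((k:ℝ)*d + d)) ⊆ S ×ˢ Set.Ioo (-L) L := by
    intro k hk
    obtain ⟨h1, h2⟩ := hKf k hk
    refine Set.prod_mono_right fun s hs => ⟨lt_trans h1 hs.1, by nlinarith [hs.2]⟩
  have key := fun (k : ℤ) (hk : k ∈ Kf) =>
    key_fubini (u := u) hd k (huL2.mono_set (hIsub k hk))
  -- a.e. integrability of the squared-norm slices, for all k simultaneously
  have hae1 : ∀ᵐ t ∂(volume.restrict (Set.Ioo (0:ℝ) 1)), ∀ k ∈ K,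
      IntegrableOn (fun x' => ‖u (x', ((k:ℝ) + t) * d)‖ ^ 2) S := by
    rw [ae_ball_iff hKfin.countable]
    intro k hk
    exact (key k ((hmemK k).2 hk)).1
  constructor
  · filter_upwards [hae1] with t ht
    intro k hkK
    exact slice_bilin_integrable hSfin hu hF hFbd (ht k hkK)
  · set G : ℤ → ℝ → ℝ := fun k t => ∫ x' in S, ‖u (x', ((k:ℝ) + t) * d)‖ ^ 2 with hGdef
    have hG0 : ∀ k t, 0 ≤ G k t := fun k t => integral_nonneg fun x' => by positivity
    set B : ℝ := 2 * L * (volume S).toReal * M ^ 2 with hBdef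
    have hB0 : 0 ≤ B := by positivity
    have hαsum : ∀ t, α t = ∑ k ∈ Kf, ((d:ℂ) *
        ∫ x' in S, bilinDot (u (x', ((k:ℝ) + t) * d)) (F (x', ((k:ℝ) + t) * d))) := by
      intro t
      rw [hα t]
      have hKc : K = (↑Kf : Set ℤ) := by rw [hKfdef, hKfin.coe_toFinset]
      rw [hKc]
      exact Finset.tsum_subtype' Kf (fun k : ℤ => (d:ℂ) *
        ∫ x' in S, bilinDot (u (x', ((k:ℝ) + t) * d)) (F (x', ((k:ℝ) + t) * d)))
    have hsum_d : ∑ _k ∈ Kf, d ≤ 2 * L := sum_d_le hL hd Kf hKf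
    have hbound : ∀ᵐ t ∂(volume.restrict (Set.Ioo (0:ℝ) 1)),
        ‖α t‖ ^ 2 ≤ B * ∑ k ∈ Kf, d * G k t := by
      filter_upwards [hae1] with t ht
      set b : ℤ → ℝ := fun k =>
        ‖∫ x' in S, bilinDot (u (x', ((k:ℝ) + t) * d)) (F (x', ((k:ℝ) + t) * d))‖ with hbdef
      have h1 : ‖α t‖ ≤ ∑ k ∈ Kf, d * b k := by
        rw [hαsum t]
        refine (norm_sum_le _ _).trans (Finset.sum_le_sum fun k hk => ?_)
        rw [norm_mul, Complex.norm_real, Real.norm_of_nonneg hd.le]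
      have h2 := Finset.sum_mul_sq_le_sq_mul_sq Kf (fun _ => Real.sqrt d)
        (fun k => Real.sqrt d * b k)
      calc ‖α t‖ ^ 2 ≤ (∑ k ∈ Kf, d * b k) ^ 2 := pow_le_pow_left₀ (norm_nonneg _) h1 2
        _ ≤ (∑ _k ∈ Kf, d) * (∑ k ∈ Kf, d * (b k) ^ 2) := by
            rw [show (∑ k ∈ Kf, d * b k) = ∑ k ∈ Kf, Real.sqrt d * (Real.sqrt d * b k) from
              Finset.sum_congr rfl fun k _ => by rw [← mul_assoc, Real.mul_self_sqrt hd.le]]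
            refine h2.trans_eq ?_
            congr 1
            · exact Finset.sum_congr rfl fun k _ => Real.sq_sqrt hd.le
            · exact Finset.sum_congr rfl fun k _ => by rw [mul_pow, Real.sq_sqrt hd.le]
        _ ≤ (2 * L) * (∑ k ∈ Kf, d * (b k) ^ 2) := by
            refine mul_le_mul_of_nonneg_right hsum_d (Finset.sum_nonneg fun k _ => ?_)
            positivity
        _ ≤ (2 * L) * (∑ k ∈ Kf, d * ((volume S).toReal * M ^ 2 * G k t)) := by
            refine mul_le_mul_of_nonneg_left (Finset.sum_le_sum fun k hk => ?_) (by positivity)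
            exact mul_le_mul_of_nonneg_left
              (slice_bound hSfin hM hu hF hFbd (ht k ((hmemK k).1 hk))) hd.le
        _ = B * ∑ k ∈ Kf, d * G k t := by
            rw [hBdef, Finset.mul_sum, Finset.mul_sum]
            exact Finset.sum_congr rfl fun k _ => by ring
    have hDint : Integrable (fun t => B * ∑ k ∈ Kf, d * G k t)
        (volume.restrict (Set.Ioo (0:ℝ) 1)) := by
      refine Integrable.const_mul ?_ B
      refine integrable_finset_sum Kf fun k hk => ?_
      exact ((key k hk).2.1).const_mul d
    have hmono := integral_mono_of_nonneg
      (Filter.Eventually.of_forall fun t => sq_nonneg ‖α t‖) hDint hbound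
    have hDeq : (∫ t in Set.Ioo (0:ℝ) 1, B * ∑ k ∈ Kf, d * G k t)
        = B * ∑ k ∈ Kf, d * ∫ t in Set.Ioo (0:ℝ) 1, G k t := by
      rw [integral_const_mul]
      congr 1
      rw [integral_finset_sum Kf fun k hk => ((key k hk).2.1).const_mul d]
      exact Finset.sum_congr rfl fun k hk => integral_const_mul d _
    have hsumW : ∑ k ∈ Kf, (∫ x in S ×ˢ Set.Ioo ((k:ℝ)*d) ((k:ℝ)*d + d), ‖u x‖ ^ 2)
        ≤ ∫ x in S ×ˢ Set.Ioo (-L) L, ‖u x‖ ^ 2 := by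
      have hdisj : (↑Kf : Set ℤ).PairwiseDisjoint
          (fun k : ℤ => S ×ˢ Set.Ioo ((k:ℝ)*d) ((k:ℝ)*d + d)) := by
        intro j _ k _ hjk
        refine Set.Disjoint.set_prod_right ?_ S S
        rw [Set.Ioo_disjoint_Ioo]
        rcases lt_or_gt_of_ne hjk with h | h
        · have : (j:ℝ) + 1 ≤ (k:ℝ) := by exact_mod_cast h
          refine min_le_of_left_le (le_max_of_le_right ?_)
          nlinarith
        · have : (k:ℝ) + 1 ≤ (j:ℝ) := by exact_mod_cast h
          refine min_le_of_right_le (le_max_of_le_left ?_)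
          nlinarith
      rw [← integral_biUnion_finset Kf (fun k _ => hSm.prod measurableSet_Ioo) hdisj
        (fun k hk => huL2.mono_set (hIsub k hk))]
      refine setIntegral_mono_set huL2
        (Filter.Eventually.of_forall fun x => by positivity) ?_
      refine HasSubset.Subset.eventuallyLE ?_
      exact Set.iUnion₂_subset hIsub
    calc (∫ t in Set.Ioo (0:ℝ) 1, ‖α t‖ ^ 2)
        ≤ ∫ t in Set.Ioo (0:ℝ) 1, B * ∑ k ∈ Kf, d * G k t := hmono
      _ = B * ∑ k ∈ Kf, d * ∫ t in Set.Ioo (0:ℝ) 1, G k t := hDeq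
      _ = B * ∑ k ∈ Kf, (∫ x in S ×ˢ Set.Ioo ((k:ℝ)*d) ((k:ℝ)*d + d), ‖u x‖ ^ 2) := by
          congr 1
          exact Finset.sum_congr rfl fun k hk => (key k hk).2.2
      _ ≤ B * ∫ x in S ×ˢ Set.Ioo (-L) L, ‖u x‖ ^ 2 := mul_le_mul_of_nonneg_left hsumW hB0
end

section
/- Let g : ℝ³ → ℝ³ be twice continuously differentiable and let E : ℝ³ → ℂ³ be continuously differentiable. Define Ẽ : ℝ³ → ℂ³ componentwise by Ẽ_i(x) = ∑_{j=1}^{3} E_j(g(x)) · ∂_i g_j(x) for i = 1,2,3. Then for every x ∈ ℝ³, (curl Ẽ)(x) = (1/2) ∑_{j ≠ l} ( ∇g_l(x) ×ℝ ∇g_j(x) ) · ( ∂_l E_j − ∂_j E_l )(g(x)), where the sum is over ordered pairs (j,l) with j, l ∈ {1,2,3} and j ≠ l, ∇g_m(x) ∈ ℝ³ is the gradient of the m-th component of g, ×ℝ is the cross product on ℝ³, and the real vector ∇g_l(x) ×ℝ ∇g_j(x) is multiplied by the complex scalar (∂_l E_j − ∂_j E_l)(g(x)). -/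
/-- Partial derivative `∂_i f` of a `ℂ`-valued function on `ℝ³`. -/
noncomputable def pdC (i : Fin 3) (f : (Fin 3 → ℝ) → ℂ) (x : Fin 3 → ℝ) : ℂ :=
  fderiv ℝ f x (Pi.single i 1)

/-- Partial derivative `∂_i f` of an `ℝ`-valued function on `ℝ³`. -/
noncomputable def pdR (i : Fin 3) (f : (Fin 3 → ℝ) → ℝ) (x : Fin 3 → ℝ) : ℝ :=
  fderiv ℝ f x (Pi.single i 1)

/-- The curl of a `ℂ³`-valued vector field on `ℝ³`:
`curl u = (∂₂u₃ − ∂₃u₂, ∂₃u₁ − ∂₁u₃, ∂₁u₂ − ∂₂u₁)`. -/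
noncomputable def curl3 (u : (Fin 3 → ℝ) → Fin 3 → ℂ) (x : Fin 3 → ℝ) : Fin 3 → ℂ :=
  ![pdC 1 (fun y => u y 2) x - pdC 2 (fun y => u y 1) x,
    pdC 2 (fun y => u y 0) x - pdC 0 (fun y => u y 2) x,
    pdC 0 (fun y => u y 1) x - pdC 1 (fun y => u y 0) x]

/-- The gradient of an `ℝ`-valued function on `ℝ³`. -/
noncomputable def grad3 (f : (Fin 3 → ℝ) → ℝ) (x : Fin 3 → ℝ) : Fin 3 → ℝ :=
  fun i => pdR i f x


/-- Expansion of a continuous linear map on `ℝ³` in the standard basis. -/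
lemma clm_expand (φ : (Fin 3 → ℝ) →L[ℝ] ℂ) (v : Fin 3 → ℝ) :
    φ v = ∑ k, (v k : ℂ) * φ (Pi.single k 1) := by
  have hv : v = ∑ k, (v k) • (Pi.single k 1 : Fin 3 → ℝ) := by
    funext m
    simp [Finset.sum_apply, Pi.single_apply, mul_comm]
  conv_lhs => rw [hv]
  rw [map_sum]
  congr 1; funext k
  rw [map_smul]
  simp [Complex.real_smul]

/-- Symmetry of second partial derivatives for a `C²` function. -/
lemma pd_symm (f : (Fin 3 → ℝ) → ℝ) (hf : ContDiff ℝ 2 f) (x : Fin 3 → ℝ) (a b : Fin 3) :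
    fderiv ℝ (fun y => pdR b f y) x (Pi.single a 1)
      = fderiv ℝ (fun y => pdR a f y) x (Pi.single b 1) := by
  have hdf : ContDiff ℝ 1 (fderiv ℝ f) := hf.fderiv_right (by norm_num)
  have hdfx : DifferentiableAt ℝ (fderiv ℝ f) x := hdf.differentiable one_ne_zero x
  have key : ∀ w z : Fin 3 → ℝ, fderiv ℝ (fun y => fderiv ℝ f y w) x z
      = fderiv ℝ (fderiv ℝ f) x z w := by
    intro w z
    rw [fderiv_clm_apply hdfx (differentiableAt_const w)]
    simp
  have hsymm : IsSymmSndFDerivAt ℝ f x :=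
    (hf.contDiffAt).isSymmSndFDerivAt (by norm_num)
  show fderiv ℝ (fun y => fderiv ℝ f y (Pi.single b 1)) x (Pi.single a 1) = _
  rw [key, hsymm.eq, ← key]
  rfl

lemma fderiv_ofReal_comp (w : (Fin 3 → ℝ) → ℝ) (x : Fin 3 → ℝ)
    (hw : DifferentiableAt ℝ w x) :
    fderiv ℝ (fun y => ((w y : ℝ) : ℂ)) x = Complex.ofRealCLM.comp (fderiv ℝ w x) :=
  (Complex.ofRealCLM.hasFDerivAt.comp x hw.hasFDerivAt).fderiv

/-- Derivative of the pulled-back field, by product and chain rule. -/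
lemma pd_Et (g : (Fin 3 → ℝ) → Fin 3 → ℝ) (hg : ContDiff ℝ 2 g)
    (E : (Fin 3 → ℝ) → Fin 3 → ℂ) (hE : ContDiff ℝ 1 E)
    (a b : Fin 3) (x : Fin 3 → ℝ) :
    pdC a (fun y => ∑ j, E (g y) j * ((pdR b (fun z => g z j) y : ℝ) : ℂ)) x
      = ∑ j, (E (g x) j *
            ((fderiv ℝ (fun y => pdR b (fun z => g z j) y) x (Pi.single a 1) : ℝ) : ℂ)
          + ((pdR b (fun z => g z j) x : ℝ) : ℂ) *
            ∑ k, ((pdR a (fun z => g z k) x : ℝ) : ℂ) * pdC k (fun y => E y j) (g x)) := by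
  have hg1 : ContDiff ℝ 1 g := hg.of_le one_le_two
  have hG : ∀ j, ContDiff ℝ 2 (fun y => g y j) := fun j => (contDiff_pi.1 hg) j
  have hEc : ∀ j, ContDiff ℝ 1 (fun y => E y j) := fun j => (contDiff_pi.1 hE) j
  have hu : ∀ j, DifferentiableAt ℝ (fun y => E (g y) j) x := fun j =>
    (((hEc j).comp hg1).differentiable one_ne_zero) x
  have hwC : ∀ j, ContDiff ℝ 1 (fun y => pdR b (fun z => g z j) y) := by
    intro j
    have : ContDiff ℝ 1 (fun y => fderiv ℝ (fun z => g z j) y (Pi.single b 1)) :=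
      ((hG j).fderiv_right (by norm_num)).clm_apply contDiff_const
    exact this
  have hv : ∀ j, DifferentiableAt ℝ (fun y => ((pdR b (fun z => g z j) y : ℝ) : ℂ)) x := by
    intro j
    exact ((Complex.ofRealCLM.contDiff.comp (hwC j)).differentiable one_ne_zero) x
  have hprod : ∀ j ∈ Finset.univ, DifferentiableAt ℝ
      (fun y => E (g y) j * ((pdR b (fun z => g z j) y : ℝ) : ℂ)) x :=
    fun j _ => (hu j).mul (hv j)
  unfold pdC
  rw [fderiv_fun_sum hprod, ContinuousLinearMap.sum_apply]
  refine Finset.sum_congr rfl fun j _ => ?_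
  rw [fderiv_fun_mul (hu j) (hv j)]
  rw [ContinuousLinearMap.add_apply, ContinuousLinearMap.smul_apply,
    ContinuousLinearMap.smul_apply, smul_eq_mul, smul_eq_mul]
  congr 1
  · congr 1
    rw [fderiv_ofReal_comp _ _ (((hwC j).differentiable one_ne_zero) x)]
    rfl
  · congr 1
    have hchain : fderiv ℝ (fun y => E (g y) j) x
        = (fderiv ℝ (fun y => E y j) (g x)).comp (fderiv ℝ g x) :=
      ((((hEc j).differentiable one_ne_zero) (g x)).hasFDerivAt.comp x
        ((hg1.differentiable one_ne_zero x).hasFDerivAt)).fderiv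
    rw [hchain, ContinuousLinearMap.comp_apply, clm_expand]
    refine Finset.sum_congr rfl fun k _ => ?_
    congr 2
    rw [fderiv_pi (fun k => ((hG k).differentiable two_ne_zero) x)]
    rfl

/-- The key identity for a single antisymmetrized pair of derivatives of `Et`:
the second-derivative terms of `g` cancel by Schwarz symmetry. -/
lemma comp_key (g : (Fin 3 → ℝ) → Fin 3 → ℝ) (hg : ContDiff ℝ 2 g)
    (E : (Fin 3 → ℝ) → Fin 3 → ℂ) (hE : ContDiff ℝ 1 E)
    (Et : (Fin 3 → ℝ) → Fin 3 → ℂ)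
    (hEt : ∀ (x : Fin 3 → ℝ) (i : Fin 3),
      Et x i = ∑ j, E (g x) j * ((pdR i (fun y => g y j) x : ℝ) : ℂ))
    (a b : Fin 3) (x : Fin 3 → ℝ) :
    pdC a (fun y => Et y b) x - pdC b (fun y => Et y a) x
      = ∑ j, ∑ k,
        (((pdR a (fun z => g z k) x : ℝ) : ℂ) * ((pdR b (fun z => g z j) x : ℝ) : ℂ)
          - ((pdR b (fun z => g z k) x : ℝ) : ℂ) * ((pdR a (fun z => g z j) x : ℝ) : ℂ))
          * pdC k (fun y => E y j) (g x) := by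
  have hG : ∀ j, ContDiff ℝ 2 (fun y => g y j) := fun j => (contDiff_pi.1 hg) j
  have hb : (fun y => Et y b) = fun y => ∑ j, E (g y) j * ((pdR b (fun z => g z j) y : ℝ) : ℂ) :=
    funext fun y => hEt y b
  have ha : (fun y => Et y a) = fun y => ∑ j, E (g y) j * ((pdR a (fun z => g z j) y : ℝ) : ℂ) :=
    funext fun y => hEt y a
  rw [hb, ha, pd_Et g hg E hE a b x, pd_Et g hg E hE b a x, ← Finset.sum_sub_distrib]
  refine Finset.sum_congr rfl fun j _ => ?_
  rw [pd_symm _ (hG j) x a b]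
  rw [Finset.mul_sum, Finset.mul_sum]
  ring_nf
  rw [← Finset.sum_sub_distrib]

lemma cross0 (a b : Fin 3 → ℝ) : crossProduct a b 0 = a 1 * b 2 - a 2 * b 1 := by
  simp [cross_apply]
lemma cross1 (a b : Fin 3 → ℝ) : crossProduct a b 1 = a 2 * b 0 - a 0 * b 2 := by
  simp [cross_apply]
lemma cross2 (a b : Fin 3 → ℝ) : crossProduct a b 2 = a 0 * b 1 - a 1 * b 0 := by
  simp [cross_apply]

/-- Pullback identity for the curl (Appendix B, property 4, of the paper).
For `g : ℝ³ → ℝ³` of class `C²`, `E : ℝ³ → ℂ³` of class `C¹` and the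
transformed field `Ẽ_i(x) = ∑ j, E_j(g(x)) ∂_i g_j(x)`, one has
`curl Ẽ (x) = ½ ∑_{j ≠ l} (∇g_l(x) × ∇g_j(x)) · (∂_l E_j − ∂_j E_l)(g(x))`,
where the real vector `∇g_l × ∇g_j` multiplies the complex scalar
coordinatewise. -/
theorem curl_pullback
    (g : (Fin 3 → ℝ) → Fin 3 → ℝ) (hg : ContDiff ℝ 2 g)
    (E : (Fin 3 → ℝ) → Fin 3 → ℂ) (hE : ContDiff ℝ 1 E)
    (Et : (Fin 3 → ℝ) → Fin 3 → ℂ)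
    (hEt : ∀ (x : Fin 3 → ℝ) (i : Fin 3),
      Et x i = ∑ j, E (g x) j * ((pdR i (fun y => g y j) x : ℝ) : ℂ)) :
    ∀ x : Fin 3 → ℝ,
      curl3 Et x =
        (1 / 2 : ℂ) • ∑ j : Fin 3, ∑ l : Fin 3,
          if j = l then 0 else
            fun i : Fin 3 =>
              (((crossProduct (grad3 (fun y => g y l) x) (grad3 (fun y => g y j) x)) i : ℝ) : ℂ) *
                (pdC l (fun y => E y j) (g x) - pdC j (fun y => E y l) (g x)) := by
  
  intro x
  funext i
  have key := comp_key g hg E hE Et hEt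
  have h3 : i = 0 ∨ i = 1 ∨ i = 2 := by omega
  obtain rfl | rfl | rfl := h3 <;>
  · simp only [curl3, Matrix.cons_val_zero, Matrix.cons_val_one, Matrix.head_cons,
      Matrix.cons_val_two, Matrix.tail_cons, Fin.isValue]
    rw [key]
    simp [Pi.smul_apply, Finset.sum_apply, Fin.sum_univ_three, cross0, cross1, cross2, grad3]
    ring
end
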